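/- For any multiple testing procedure φ, any θ ∈ ℓ0[s] with s ≥ 1, any λ ∈ (0,1), and any ρ > 0, the combined risk is bounded below via the weighted classification loss: 𝔎(θ,φ) ≥ min(λ, ρλ/(1+ρλ)) · P_θ(L_ρ(θ,φ) ≥ λρs). -/

import Mathlib

open MeasureTheory ProbabilityTheory Filter
open scoped Classical ENNReal

noncomputable section

/-- Law of the observation `X = θ + ε` with `ε_i` i.i.d. standard Gaussian `N(0,1)`. -/
def obsLaw {n : ℕ} (θ : Fin n → ℝ) : Measure (Fin n → ℝ) :=
  Measure.pi fun i => gaussianReal (θ i) 1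

/-- Number of rejections of the decision vector `v`. -/
def numRej {n : ℕ} (v : Fin n → Bool) : ℕ :=
  (Finset.univ.filter fun i => v i = true).card

/-- Support of `θ`. -/
def supp {n : ℕ} (θ : Fin n → ℝ) : Finset (Fin n) :=
  Finset.univ.filter fun i => θ i ≠ 0

/-- False discovery proportion. -/
def FDP {n : ℕ} (θ : Fin n → ℝ) (v : Fin n → Bool) : ℝ :=
  ((Finset.univ.filter fun i => θ i = 0 ∧ v i = true).card : ℝ) / max 1 (numRej v : ℝ)

/-- False negative proportion. -/
def FNP {n : ℕ} (θ : Fin n → ℝ) (v : Fin n → Bool) : ℝ :=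
  ((Finset.univ.filter fun i => θ i ≠ 0 ∧ v i = false).card : ℝ) / max 1 ((supp θ).card : ℝ)

/-- False discovery rate. -/
def FDR {n : ℕ} (θ : Fin n → ℝ) (φ : (Fin n → ℝ) → Fin n → Bool) : ℝ :=
  ∫ x, FDP θ (φ x) ∂(obsLaw θ)

/-- False negative rate. -/
def FNR {n : ℕ} (θ : Fin n → ℝ) (φ : (Fin n → ℝ) → Fin n → Bool) : ℝ :=
  ∫ x, FNP θ (φ x) ∂(obsLaw θ)

/-- Combined multiple testing risk `𝔎 = FDR + FNR`. -/
def mtRisk {n : ℕ} (θ : Fin n → ℝ) (φ : (Fin n → ℝ) → Fin n → Bool) : ℝ :=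
  FDR θ φ + FNR θ φ

/-- The class `Θ(a, s)`: exactly `s` nonzero coordinates, all of absolute value at least `a`. -/
def ThetaSet (n : ℕ) (a : ℝ) (s : ℕ) : Set (Fin n → ℝ) :=
  {θ | (supp θ).card = s ∧ ∀ i, θ i ≠ 0 → a ≤ |θ i|}

/-- The class `Θ_b = Θ(√(2 log(n/s)) + b, s)`. -/
def ThetaB (n s : ℕ) (b : ℝ) : Set (Fin n → ℝ) :=
  ThetaSet n (Real.sqrt (2 * Real.log ((n : ℝ) / (s : ℝ))) + b) s

/-- Standard Gaussian upper tail function `Φ̄(b)`. -/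
def Phibar (b : ℝ) : ℝ := (gaussianReal 0 1 (Set.Ioi b)).toReal

/-- Weighted classification loss `L_ρ`. -/
def Lweight {n : ℕ} (ρ : ℝ) (θ : Fin n → ℝ) (v : Fin n → Bool) : ℝ :=
  ((Finset.univ.filter fun i => θ i = 0 ∧ v i = true).card : ℝ) +
    ρ * ((Finset.univ.filter fun i => θ i ≠ 0 ∧ v i = false).card : ℝ)

lemma key_real (s V W lam ρ : ℝ) (hs : 1 ≤ s) (hV : 0 ≤ V) (hW : 0 ≤ W)
    (hlam : 0 < lam) (hρ : 0 < ρ) (h : lam * ρ * s ≤ V + ρ * W) :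
    min lam (ρ * lam / (1 + ρ * lam)) ≤ V / (V + s) + W / s := by
  have hs0 : 0 < s := by linarith
  by_cases hc : lam * s ≤ W
  · have h1 : lam ≤ W / s := (le_div_iff₀ hs0).2 (by linarith [mul_comm lam s])
    have h0 : 0 ≤ V / (V + s) := div_nonneg hV (by linarith)
    calc min lam (ρ * lam / (1 + ρ * lam)) ≤ lam := min_le_left _ _
    _ ≤ W / s := h1
    _ ≤ _ := by linarith
  · push_neg at hc
    set k := ρ * lam with hk
    have hk0 : 0 < k := by positivity
    have hls : 0 < lam * s := by positivity
    set t := W / (lam * s) with ht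
    have ht0 : 0 ≤ t := div_nonneg hW hls.le
    have ht1 : t ≤ 1 := (div_le_one hls).2 hc.le
    have hWs : W / s = t * lam := by
      rw [ht]; field_simp; try ring
    have hVc : ρ * (lam * s - W) ≤ V := by nlinarith
    have hVs : 0 < V + s := by linarith
    have hkk : 0 < 1 + k := by linarith
    have h2 : (1 - t) * (k / (1 + k)) ≤ V / (V + s) := by
      have h1t : (1 - t) * (k / (1 + k)) = ((lam * s - W) * k) / ((lam * s) * (1 + k)) := by
        rw [ht]; field_simp; try ring
      rw [h1t, div_le_div_iff₀ (by positivity) hVs]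
      have e1 : 0 ≤ ((V - ρ * (lam * s - W)) * s) * lam := by
        have := sub_nonneg.2 hVc
        positivity
      have e2 : 0 ≤ V * ρ * W * lam := by positivity
      rw [hk]
      nlinarith [e1, e2]
    have hm1 : min lam (ρ * lam / (1 + ρ * lam)) ≤ lam := min_le_left _ _
    have hm2 : min lam (ρ * lam / (1 + ρ * lam)) ≤ k / (1 + k) := min_le_right _ _
    have hkpos : 0 ≤ k / (1 + k) := by positivity
    nlinarith [mul_le_mul_of_nonneg_left hm2 (by linarith : (0:ℝ) ≤ 1 - t),
      mul_le_mul_of_nonneg_left hm1 ht0, hWs]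

lemma pointwise_bound {n : ℕ} (s : ℕ) (hs : 1 ≤ s) (θ : Fin n → ℝ)
    (hθ : (supp θ).card ≤ s) (v : Fin n → Bool)
    (lam ρ : ℝ) (hlam : 0 < lam) (hρ : 0 < ρ)
    (h : lam * ρ * (s : ℝ) ≤ Lweight ρ θ v) :
    min lam (ρ * lam / (1 + ρ * lam)) ≤ FDP θ v + FNP θ v := by
  set V : ℕ := (Finset.univ.filter fun i => θ i = 0 ∧ v i = true).card with hVdef
  set W : ℕ := (Finset.univ.filter fun i => θ i ≠ 0 ∧ v i = false).card with hWdef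
  have hss : (1 : ℝ) ≤ (s : ℝ) := by exact_mod_cast hs
  have hrej : numRej v ≤ V + (supp θ).card := by
    have hsub : (Finset.univ.filter fun i => v i = true) ⊆
        (Finset.univ.filter fun i => θ i = 0 ∧ v i = true) ∪ supp θ := by
      intro i hi
      simp only [Finset.mem_filter, Finset.mem_union, Finset.mem_univ, true_and, supp] at *
      by_cases hz : θ i = 0 <;> tauto
    calc numRej v ≤ _ := Finset.card_le_card hsub
    _ ≤ _ := Finset.card_union_le _ _
  have hrejR : max 1 ((numRej v : ℝ)) ≤ (V : ℝ) + (s : ℝ) := by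
    have h1 : (numRej v : ℝ) ≤ (V : ℝ) + (s : ℝ) := by
      have : (numRej v : ℝ) ≤ (V : ℝ) + ((supp θ).card : ℝ) := by exact_mod_cast hrej
      have h2 : ((supp θ).card : ℝ) ≤ (s : ℝ) := by exact_mod_cast hθ
      linarith
    have h2 : (1 : ℝ) ≤ (V : ℝ) + (s : ℝ) := by linarith [Nat.cast_nonneg (α := ℝ) V]
    exact max_le h2 h1
  have hFDP : (V : ℝ) / ((V : ℝ) + (s : ℝ)) ≤ FDP θ v := by
    rw [FDP]
    exact div_le_div_of_nonneg_left (Nat.cast_nonneg _)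
      (lt_of_lt_of_le zero_lt_one (le_max_left _ _)) hrejR
  have hFNP : (W : ℝ) / (s : ℝ) ≤ FNP θ v := by
    rw [FNP]
    exact div_le_div_of_nonneg_left (Nat.cast_nonneg _)
      (lt_of_lt_of_le zero_lt_one (le_max_left _ _)) (max_le hss (by exact_mod_cast hθ))
  have key := key_real (s : ℝ) (V : ℝ) (W : ℝ) lam ρ hss (Nat.cast_nonneg _)
    (Nat.cast_nonneg _) hlam hρ (by rw [Lweight] at h; exact h)
  linarith

theorem statement_11 {n : ℕ} (s : ℕ) (hs : 1 ≤ s)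
    (θ : Fin n → ℝ) (hθ : (supp θ).card ≤ s)
    (φ : (Fin n → ℝ) → (Fin n → Bool)) (hφ : Measurable φ)
    (lam : ℝ) (hlam : lam ∈ Set.Ioo (0 : ℝ) 1) (ρ : ℝ) (hρ : 0 < ρ) :
    min lam (ρ * lam / (1 + ρ * lam)) *
        (obsLaw θ {x | lam * ρ * (s : ℝ) ≤ Lweight ρ θ (φ x)}).toReal ≤
      mtRisk θ φ := by
  have hμ : IsProbabilityMeasure (obsLaw θ) := by
    rw [obsLaw]; infer_instance
  set μ := obsLaw θ with hμdef
  set m := min lam (ρ * lam / (1 + ρ * lam)) with hm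
  obtain ⟨hlam0, hlam1⟩ := hlam
  set S : Set (Fin n → ℝ) := {x | lam * ρ * (s : ℝ) ≤ Lweight ρ θ (φ x)} with hS
  have hSmeas : MeasurableSet S := by
    have : S = φ ⁻¹' {v | lam * ρ * (s : ℝ) ≤ Lweight ρ θ v} := rfl
    rw [this]
    exact hφ ((Set.to_countable _).measurableSet)
  set f : (Fin n → ℝ) → ℝ := fun x => FDP θ (φ x) + FNP θ (φ x) with hf
  have hfmeas : Measurable f := by
    have : f = (fun v => FDP θ v + FNP θ v) ∘ φ := rfl
    rw [this]
    exact (measurable_of_countable _).comp hφ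
  have hFDPb : ∀ v : Fin n → Bool, 0 ≤ FDP θ v ∧ FDP θ v ≤ (n : ℝ) := by
    intro v
    constructor
    · exact div_nonneg (Nat.cast_nonneg _) (le_trans zero_le_one (le_max_left _ _))
    · rw [FDP]
      calc _ ≤ ((Finset.univ.filter fun i => θ i = 0 ∧ v i = true).card : ℝ) / 1 :=
            div_le_div_of_nonneg_left (Nat.cast_nonneg _) zero_lt_one (le_max_left _ _)
      _ ≤ (n : ℝ) := by
            rw [div_one]
            exact_mod_cast le_trans (Finset.card_filter_le _ _) (le_of_eq (Finset.card_univ.trans (Fintype.card_fin n)))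
  have hFNPb : ∀ v : Fin n → Bool, 0 ≤ FNP θ v ∧ FNP θ v ≤ (n : ℝ) := by
    intro v
    constructor
    · exact div_nonneg (Nat.cast_nonneg _) (le_trans zero_le_one (le_max_left _ _))
    · rw [FNP]
      calc _ ≤ ((Finset.univ.filter fun i => θ i ≠ 0 ∧ v i = false).card : ℝ) / 1 :=
            div_le_div_of_nonneg_left (Nat.cast_nonneg _) zero_lt_one (le_max_left _ _)
      _ ≤ (n : ℝ) := by
            rw [div_one]
            exact_mod_cast le_trans (Finset.card_filter_le _ _) (le_of_eq (Finset.card_univ.trans (Fintype.card_fin n)))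
  have hf0 : ∀ x, 0 ≤ f x := fun x => add_nonneg (hFDPb (φ x)).1 (hFNPb (φ x)).1
  have hfint : Integrable f μ := by
    refine Integrable.mono' (integrable_const ((n : ℝ) + n)) hfmeas.aestronglyMeasurable ?_
    filter_upwards with x
    rw [Real.norm_eq_abs, abs_of_nonneg (hf0 x)]
    exact add_le_add (hFDPb (φ x)).2 (hFNPb (φ x)).2
  have hmrisk : mtRisk θ φ = ∫ x, f x ∂μ := by
    rw [mtRisk, FDR, FNR, ← integral_add]
    · have hg : Measurable fun x => FDP θ (φ x) :=
        (measurable_of_countable (fun v : Fin n → Bool => FDP θ v)).comp hφ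
      refine Integrable.mono' (integrable_const (n : ℝ)) hg.aestronglyMeasurable ?_
      filter_upwards with x
      rw [Real.norm_eq_abs, abs_of_nonneg (hFDPb (φ x)).1]
      exact (hFDPb (φ x)).2
    · have hg : Measurable fun x => FNP θ (φ x) :=
        (measurable_of_countable (fun v : Fin n → Bool => FNP θ v)).comp hφ
      refine Integrable.mono' (integrable_const (n : ℝ)) hg.aestronglyMeasurable ?_
      filter_upwards with x
      rw [Real.norm_eq_abs, abs_of_nonneg (hFNPb (φ x)).1]
      exact (hFNPb (φ x)).2
  rw [hmrisk]
  calc m * (μ S).toReal = ∫ _ in S, m ∂μ := by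
        rw [setIntegral_const, smul_eq_mul, mul_comm]; rfl
  _ ≤ ∫ x in S, f x ∂μ := by
        refine setIntegral_mono_on (integrableOn_const (measure_ne_top μ S))
          (hfint.integrableOn) hSmeas ?_
        intro x hx
        exact pointwise_bound s hs θ hθ (φ x) lam ρ hlam0 hρ hx
  _ ≤ ∫ x, f x ∂μ := setIntegral_le_integral hfint (Filter.Eventually.of_forall hf0)
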